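/- arXiv:math/9802121 — 2 statements merged into one kernel-verified Lean document; each statement's English description precedes it below -/
import Mathlib

section
/- Define Θ(x) = Σ_{n∈ℤ} exp(−π n² x²) for x > 0. For s, t ∈ ℂ with Re(s) < 0 and Re(t) < 0, the integral ζ_Q(s,t) = ∫₀^∞ Θ(x)^s Θ(1/x)^t dx/x converges absolutely. -/
open Real Complex MeasureTheory

/-- `Θ(x) = ∑_{n ∈ ℤ} exp (-π n² x²)` for `x > 0`. -/
noncomputable def ThetaQ (x : ℝ) : ℝ := ∑' n : ℤ, Real.exp (-Real.pi * n ^ 2 * x ^ 2)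

lemma theta_summable {x : ℝ} (hx : 0 < x) :
    Summable fun n : ℤ => Real.exp (-Real.pi * n ^ 2 * x ^ 2) := by
  have hr : Real.exp (-Real.pi * x ^ 2) < 1 := by
    apply Real.exp_lt_one_iff.2
    nlinarith [Real.pi_pos, mul_pos Real.pi_pos (pow_pos hx 2)]
  have hr0 : 0 ≤ Real.exp (-Real.pi * x ^ 2) := (Real.exp_pos _).le
  have hg : Summable fun n : ℤ => Real.exp (-Real.pi * x ^ 2) ^ n.natAbs := by
    apply Summable.of_nat_of_neg <;>
      simpa using summable_geometric_of_lt_one hr0 hr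
  refine hg.of_norm_bounded (fun n => ?_)
  rw [Real.norm_eq_abs, abs_of_pos (Real.exp_pos _), ← Real.exp_nat_mul]
  apply Real.exp_le_exp.2
  have h1 : (n.natAbs : ℝ) ≤ (n : ℝ) ^ 2 := by
    have h2 : ((n.natAbs : ℝ)) ^ 2 = (n : ℝ) ^ 2 := by
      rw [Nat.cast_natAbs]; push_cast; rw [_root_.sq_abs]
    have h3 : n.natAbs ≤ n.natAbs ^ 2 := Nat.le_self_pow two_ne_zero _
    calc (n.natAbs : ℝ) ≤ ((n.natAbs : ℝ)) ^ 2 := by exact_mod_cast h3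
      _ = (n : ℝ) ^ 2 := h2
  nlinarith [Real.pi_pos, sq_nonneg x, mul_pos Real.pi_pos (pow_pos hx 2)]

lemma theta_one_le {x : ℝ} (hx : 0 < x) : 1 ≤ ThetaQ x := by
  have := Summable.le_tsum (theta_summable hx) 0 (fun n _ => (Real.exp_pos _).le)
  simpa [ThetaQ] using this

lemma theta_pos {x : ℝ} (hx : 0 < x) : 0 < ThetaQ x :=
  lt_of_lt_of_le one_pos (theta_one_le hx)

lemma theta_lower {x : ℝ} (hx : 0 < x) : Real.exp (-Real.pi) / x ≤ ThetaQ x := by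
  set N : ℕ := ⌊1 / x⌋₊ with hN
  have hsum := theta_summable hx
  have hF : ∑ k ∈ Finset.range (N + 1),
      Real.exp (-Real.pi * ((k : ℤ) : ℝ) ^ 2 * x ^ 2) ≤ ThetaQ x := by
    have := Summable.sum_le_tsum ((Finset.range (N + 1)).map
        ⟨(Nat.cast : ℕ → ℤ), fun a b h => by exact_mod_cast h⟩)
      (fun n _ => (Real.exp_pos _).le) hsum
    rw [Finset.sum_map] at this
    exact this
  have hterm : ∀ k ∈ Finset.range (N + 1),
      Real.exp (-Real.pi) ≤ Real.exp (-Real.pi * ((k : ℤ) : ℝ) ^ 2 * x ^ 2) := by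
    intro k hk
    apply Real.exp_le_exp.2
    have hk' : (k : ℝ) ≤ 1 / x := by
      calc (k : ℝ) ≤ N := by exact_mod_cast Nat.lt_succ_iff.mp (Finset.mem_range.mp hk)
        _ ≤ 1 / x := Nat.floor_le (by positivity)
    have hkx : (k : ℝ) * x ≤ 1 := by
      rw [le_div_iff₀ hx] at hk'
      linarith
    have hsq : ((k : ℤ) : ℝ) ^ 2 * x ^ 2 ≤ 1 := by
      push_cast
      nlinarith [mul_nonneg (Nat.cast_nonneg (α := ℝ) k) hx.le]
    nlinarith [Real.pi_pos]
  have hcard : (N + 1 : ℝ) * Real.exp (-Real.pi) ≤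
      ∑ k ∈ Finset.range (N + 1), Real.exp (-Real.pi * ((k : ℤ) : ℝ) ^ 2 * x ^ 2) := by
    calc (N + 1 : ℝ) * Real.exp (-Real.pi)
        = ∑ _k ∈ Finset.range (N + 1), Real.exp (-Real.pi) := by
          rw [Finset.sum_const, Finset.card_range]; push_cast; ring
      _ ≤ _ := Finset.sum_le_sum hterm
  have hNx : 1 / x ≤ (N + 1 : ℝ) := by
    have := (Nat.lt_floor_add_one (1 / x)).le
    push_cast at this ⊢
    linarith
  calc Real.exp (-Real.pi) / x = (1 / x) * Real.exp (-Real.pi) := by ring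
    _ ≤ (N + 1 : ℝ) * Real.exp (-Real.pi) :=
        mul_le_mul_of_nonneg_right hNx (Real.exp_pos _).le
    _ ≤ _ := hcard.trans hF

lemma theta_continuousAt {x : ℝ} (hx : 0 < x) : ContinuousAt ThetaQ x := by
  set a := x / 2 with ha
  have ha0 : 0 < a := by positivity
  have hco : ContinuousOn ThetaQ (Set.Ioi a) := by
    apply continuousOn_tsum (u := fun n : ℤ => Real.exp (-Real.pi * n ^ 2 * a ^ 2))
    · intro n; exact Continuous.continuousOn (by continuity)
    · exact theta_summable ha0
    · intro n y hy
      rw [Real.norm_eq_abs, abs_of_pos (Real.exp_pos _)]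
      apply Real.exp_le_exp.2
      have hy' : a ≤ y := le_of_lt hy
      have hyy : a ^ 2 ≤ y ^ 2 := by nlinarith
      nlinarith [mul_nonneg (mul_nonneg Real.pi_pos.le (sq_nonneg ((n:ℤ) : ℝ))) (sub_nonneg.2 hyy)]
  exact hco.continuousAt (Ioi_mem_nhds (by linarith))

lemma theta_continuousOn : ContinuousOn ThetaQ (Set.Ioi 0) := fun x hx =>
  (theta_continuousAt hx).continuousWithinAt

/-- The two-variable zeta integral `∫₀^∞ Θ(x)ˢ Θ(1/x)ᵗ dx/x` of `ℚ` converges absolutely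
for `Re s < 0` and `Re t < 0` (complex powers taken via the real logarithm of `Θ > 0`). -/
theorem two_variable_zeta_integrable (s t : ℂ) (hs : s.re < 0) (ht : t.re < 0) :
    IntegrableOn
      (fun x : ℝ =>
        Complex.exp (s * Real.log (ThetaQ x)) * Complex.exp (t * Real.log (ThetaQ (1 / x))) / x)
      (Set.Ioi 0) := by
  set f : ℝ → ℂ := fun x =>
    Complex.exp (s * Real.log (ThetaQ x)) * Complex.exp (t * Real.log (ThetaQ (1 / x))) / x
    with hf
  have hinv : ∀ x : ℝ, 0 < x → (0:ℝ) < 1 / x := fun x hx => by positivity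
  -- measurability
  have hmeas : AEStronglyMeasurable f (volume.restrict (Set.Ioi (0:ℝ))) := by
    apply ContinuousOn.aestronglyMeasurable _ measurableSet_Ioi
    apply ContinuousOn.div
    · apply ContinuousOn.mul
      · apply Complex.continuous_exp.comp_continuousOn
        apply continuousOn_const.mul
        apply Complex.continuous_ofReal.comp_continuousOn
        exact Real.continuousOn_log.comp theta_continuousOn
          (fun x hx => ne_of_gt (theta_pos hx))
      · apply Complex.continuous_exp.comp_continuousOn
        apply continuousOn_const.mul
        apply Complex.continuous_ofReal.comp_continuousOn
        apply Real.continuousOn_log.comp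
        · exact theta_continuousOn.comp (continuousOn_const.div continuousOn_id
            (fun x hx => ne_of_gt hx)) (fun x hx => Set.mem_Ioi.2 (hinv x hx))
        · exact fun x hx => ne_of_gt (theta_pos (hinv x hx))
    · exact Complex.continuous_ofReal.continuousOn
    · intro x hx
      exact_mod_cast ne_of_gt (Set.mem_Ioi.mp hx)
  -- norm formula
  have hnorm : ∀ x : ℝ, 0 < x →
      ‖f x‖ = ThetaQ x ^ s.re * ThetaQ (1/x) ^ t.re / x := by
    intro x hx
    have h1 : ‖Complex.exp (s * Real.log (ThetaQ x))‖ = ThetaQ x ^ s.re := by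
      rw [Complex.norm_exp, Real.rpow_def_of_pos (theta_pos hx)]
      congr 1
      simp [Complex.mul_re]
      ring
    have h2 : ‖Complex.exp (t * Real.log (ThetaQ (1/x)))‖ = ThetaQ (1/x) ^ t.re := by
      rw [Complex.norm_exp,
        Real.rpow_def_of_pos (theta_pos (hinv x hx))]
      congr 1
      simp [Complex.mul_re]
      ring
    rw [hf]
    simp only [norm_div, norm_mul, h1, h2, Complex.norm_real, Real.norm_eq_abs,
      abs_of_pos hx]
  have hIoc : IntegrableOn f (Set.Ioc 0 1) := by
    have hg : IntegrableOn (fun x : ℝ => Real.exp (-Real.pi) ^ s.re * x ^ (-s.re - 1))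
        (Set.Ioc (0:ℝ) 1) := by
      have hbase : IntegrableOn (fun x : ℝ => x ^ (-s.re - 1)) (Set.Ioc (0:ℝ) 1) :=
        (intervalIntegrable_iff_integrableOn_Ioc_of_le zero_le_one).1
          (intervalIntegral.intervalIntegrable_rpow' (by linarith))
      exact hbase.const_mul _
    refine Integrable.mono' hg (hmeas.mono_measure
      (Measure.restrict_mono Set.Ioc_subset_Ioi_self le_rfl)) ?_
    rw [ae_restrict_iff' measurableSet_Ioc]
    filter_upwards with x hx
    obtain ⟨hx0, hx1⟩ := hx
    rw [hnorm x hx0]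
    have hb1 : ThetaQ x ^ s.re ≤ (Real.exp (-Real.pi) / x) ^ s.re :=
      Real.rpow_le_rpow_of_nonpos (by positivity) (theta_lower hx0) hs.le
    have hb2 : ThetaQ (1/x) ^ t.re ≤ 1 :=
      Real.rpow_le_one_of_one_le_of_nonpos (theta_one_le (hinv x hx0)) ht.le
    have heq : (Real.exp (-Real.pi) / x) ^ s.re / x
        = Real.exp (-Real.pi) ^ s.re * x ^ (-s.re - 1) := by
      rw [Real.div_rpow (Real.exp_pos _).le hx0.le, Real.rpow_sub hx0, Real.rpow_one,
        Real.rpow_neg hx0.le]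
      field_simp
    calc ThetaQ x ^ s.re * ThetaQ (1/x) ^ t.re / x
        ≤ (Real.exp (-Real.pi) / x) ^ s.re * 1 / x := by
          have hmm : ThetaQ x ^ s.re * ThetaQ (1/x) ^ t.re
              ≤ (Real.exp (-Real.pi) / x) ^ s.re * 1 :=
            mul_le_mul hb1 hb2 (Real.rpow_nonneg (theta_pos (hinv x hx0)).le _)
              (Real.rpow_nonneg (by positivity) _)
          exact div_le_div_of_nonneg_right hmm hx0.le |>.trans_eq rfl
      _ = Real.exp (-Real.pi) ^ s.re * x ^ (-s.re - 1) := by rw [mul_one, heq]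
  have hIoi : IntegrableOn f (Set.Ioi 1) := by
    have hg : IntegrableOn (fun x : ℝ => Real.exp (-Real.pi) ^ t.re * x ^ (t.re - 1))
        (Set.Ioi (1:ℝ)) :=
      (integrableOn_Ioi_rpow_of_lt (by linarith) one_pos).const_mul _
    refine Integrable.mono' hg (hmeas.mono_measure
      (Measure.restrict_mono (Set.Ioi_subset_Ioi zero_le_one) le_rfl)) ?_
    rw [ae_restrict_iff' measurableSet_Ioi]
    filter_upwards with x hx
    have hx1 : (1:ℝ) < x := hx
    have hx0 : (0:ℝ) < x := lt_trans one_pos hx1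
    rw [hnorm x hx0]
    have hb1 : ThetaQ x ^ s.re ≤ 1 :=
      Real.rpow_le_one_of_one_le_of_nonpos (theta_one_le hx0) hs.le
    have hlow2 : Real.exp (-Real.pi) * x ≤ ThetaQ (1/x) := by
      have := theta_lower (hinv x hx0)
      have hEq : rexp (-Real.pi) / (1 / x) = rexp (-Real.pi) * x := by
        field_simp
      rwa [hEq] at this
    have hb2 : ThetaQ (1/x) ^ t.re ≤ (Real.exp (-Real.pi) * x) ^ t.re :=
      Real.rpow_le_rpow_of_nonpos (by positivity) hlow2 ht.le
    have heq : (Real.exp (-Real.pi) * x) ^ t.re / x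
        = Real.exp (-Real.pi) ^ t.re * x ^ (t.re - 1) := by
      rw [Real.mul_rpow (Real.exp_pos _).le hx0.le, Real.rpow_sub hx0, Real.rpow_one]
      ring
    calc ThetaQ x ^ s.re * ThetaQ (1/x) ^ t.re / x
        ≤ 1 * (Real.exp (-Real.pi) * x) ^ t.re / x := by
          have hmm : ThetaQ x ^ s.re * ThetaQ (1/x) ^ t.re
              ≤ 1 * (Real.exp (-Real.pi) * x) ^ t.re :=
            mul_le_mul hb1 hb2 (Real.rpow_nonneg (theta_pos (hinv x hx0)).le _) zero_le_one
          exact div_le_div_of_nonneg_right hmm hx0.le |>.trans_eq rfl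
      _ = Real.exp (-Real.pi) ^ t.re * x ^ (t.re - 1) := by rw [one_mul, heq]
  have hunion : Set.Ioc (0:ℝ) 1 ∪ Set.Ioi 1 = Set.Ioi 0 := Set.Ioc_union_Ioi_eq_Ioi zero_le_one
  rw [← hunion]
  exact hIoc.union hIoi
end

section
/- For every x ∈ ℝ, Σ_{n∈ℤ} exp(−π n² e^{−2x}) ≤ (1 + e^{x}) · Σ_{n∈ℤ} exp(−π n²); consequently h⁰(D_x) ≤ log(1 + e^x) + h⁰(O_Q) for all Arakelov divisors D_x of Q. -/
open Real

lemma summable_theta {c : ℝ} (hc : 0 < c) :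
    Summable fun n : ℤ => Real.exp (-π * n ^ 2 * c) := by
  have hb0 : 0 < Real.exp (-(π * c)) := Real.exp_pos _
  have hb1 : Real.exp (-(π * c)) < 1 := by
    rw [Real.exp_lt_one_iff]
    have := Real.pi_pos; nlinarith
  have hnat : Summable fun n : ℕ => Real.exp (-π * (n : ℝ) ^ 2 * c) := by
    refine Summable.of_nonneg_of_le (fun n => (Real.exp_pos _).le) (fun n => ?_)
      (summable_geometric_of_lt_one hb0.le hb1)
    · have : Real.exp (-π * (n : ℝ) ^ 2 * c) = Real.exp (-(π * c)) ^ (n ^ 2) := by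
        rw [← Real.exp_nat_mul]; push_cast; ring_nf
      rw [this]
      exact pow_le_pow_of_le_one hb0.le hb1.le (Nat.le_self_pow two_ne_zero n)
  apply Summable.of_nat_of_neg
  · exact_mod_cast hnat
  · convert hnat using 2 with n
    push_cast
    rfl
    push_cast
    ring_nf

lemma theta_pos_s19 {c : ℝ} (hc : 0 < c) :
    0 < ∑' n : ℤ, Real.exp (-π * n ^ 2 * c) :=
  Summable.tsum_pos (summable_theta hc) (fun n => (Real.exp_pos _).le) 0 (Real.exp_pos _)

lemma theta_mono {c : ℝ} (hc : 1 ≤ c) :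
    (∑' n : ℤ, Real.exp (-π * n ^ 2 * c)) ≤ ∑' n : ℤ, Real.exp (-π * n ^ 2) := by
  have h1 : (∑' n : ℤ, Real.exp (-π * n ^ 2)) = ∑' n : ℤ, Real.exp (-π * n ^ 2 * 1) := by
    simp
  rw [h1]
  refine Summable.tsum_le_tsum (fun n => ?_) (summable_theta (lt_of_lt_of_le one_pos hc))
    (summable_theta one_pos)
  apply Real.exp_le_exp.mpr
  have hn : (0 : ℝ) ≤ π * n ^ 2 := by positivity
  nlinarith

/-- For every real `x`,
`∑_{n∈ℤ} e^{-π n² e^{-2x}} ≤ (1 + eˣ) ∑_{n∈ℤ} e^{-π n²}`; consequently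
`h⁰(D_x) ≤ log (1 + eˣ) + h⁰(O_ℚ)`. -/
theorem kzero_le_and_hzero_le (x : ℝ) :
    (∑' n : ℤ, Real.exp (-π * n ^ 2 * Real.exp (-2 * x))) ≤
        (1 + Real.exp x) * ∑' n : ℤ, Real.exp (-π * n ^ 2) ∧
      Real.log (∑' n : ℤ, Real.exp (-π * n ^ 2 * Real.exp (-2 * x))) ≤
        Real.log (1 + Real.exp x) + Real.log (∑' n : ℤ, Real.exp (-π * n ^ 2)) := by
  have hT1 : (0 : ℝ) < ∑' n : ℤ, Real.exp (-π * n ^ 2) := by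
    have := theta_pos_s19 one_pos
    simpa using this
  have key : (∑' n : ℤ, Real.exp (-π * n ^ 2 * Real.exp (-2 * x))) ≤
      (1 + Real.exp x) * ∑' n : ℤ, Real.exp (-π * n ^ 2) := by
    rcases le_or_gt x 0 with hx | hx
    · have h1 : (1 : ℝ) ≤ Real.exp (-2 * x) := by
        rw [Real.one_le_exp_iff]; linarith
      calc (∑' n : ℤ, Real.exp (-π * n ^ 2 * Real.exp (-2 * x)))
          ≤ ∑' n : ℤ, Real.exp (-π * n ^ 2) := theta_mono h1
        _ ≤ (1 + Real.exp x) * ∑' n : ℤ, Real.exp (-π * n ^ 2) := by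
            nlinarith [Real.exp_pos x]
    · have heq := Real.tsum_exp_neg_mul_int_sq (a := Real.exp (-2 * x)) (Real.exp_pos _)
      have h2 : (∑' n : ℤ, Real.exp (-π * n ^ 2 * Real.exp (-2 * x)))
          = ∑' n : ℤ, Real.exp (-π * Real.exp (-2 * x) * n ^ 2) := by
        congr 1; funext n; ring_nf
      have hsq : (Real.exp (-2 * x)) ^ ((1 : ℝ) / 2) = Real.exp (-x) := by
        rw [← Real.exp_mul]; ring_nf
      have hdiv : -π / Real.exp (-2 * x) = -(π * Real.exp (2 * x)) := by
        rw [show (-2:ℝ)*x = -(2*x) by ring, Real.exp_neg]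
        field_simp
      have h3 : (∑' n : ℤ, Real.exp (-π / Real.exp (-2 * x) * n ^ 2))
          ≤ ∑' n : ℤ, Real.exp (-π * n ^ 2) := by
        have h1 : (1 : ℝ) ≤ Real.exp (2 * x) := by
          rw [Real.one_le_exp_iff]; linarith
        have := theta_mono h1
        calc (∑' n : ℤ, Real.exp (-π / Real.exp (-2 * x) * n ^ 2))
            = ∑' n : ℤ, Real.exp (-π * n ^ 2 * Real.exp (2 * x)) := by
              congr 1; funext n; rw [hdiv]; ring_nf
          _ ≤ _ := this
      have h4 : 1 / Real.exp (-x) = Real.exp x := by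
        rw [Real.exp_neg, one_div, inv_inv]
      rw [h2, heq, hsq, h4]
      calc Real.exp x * ∑' n : ℤ, Real.exp (-π / Real.exp (-2 * x) * n ^ 2)
          ≤ Real.exp x * ∑' n : ℤ, Real.exp (-π * n ^ 2) := by
            exact mul_le_mul_of_nonneg_left h3 (Real.exp_pos x).le
        _ ≤ (1 + Real.exp x) * ∑' n : ℤ, Real.exp (-π * n ^ 2) := by nlinarith
  refine ⟨key, ?_⟩
  calc Real.log (∑' n : ℤ, Real.exp (-π * n ^ 2 * Real.exp (-2 * x)))
      ≤ Real.log ((1 + Real.exp x) * ∑' n : ℤ, Real.exp (-π * n ^ 2)) :=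
        Real.log_le_log (theta_pos_s19 (Real.exp_pos _)) key
    _ = Real.log (1 + Real.exp x) + Real.log (∑' n : ℤ, Real.exp (-π * n ^ 2)) := by
        rw [Real.log_mul (by positivity) (ne_of_gt hT1)]
end
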